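/- Let X be a closed subspace of a Banach space Y with Y/X finite-dimensional, let (Z_j) be a sequence of Banach spaces, and let T : Y → (⊕_j Z_j)_{ℓ^∞} be a bounded linear operator with T(X) ⊆ (⊕_j Z_j)_{c_0}. Then for every ε > 0 there exists a bounded linear operator T̃ : Y → (⊕_j Z_j)_{c_0} extending T|X with ‖T̃‖ ≤ (2+ε)‖T‖. -/

import Mathlib

open Filter Topology ENNReal
set_option maxHeartbeats 2000000

noncomputable def c0Submodule (Z : ℕ → Type*) [∀ j, NormedAddCommGroup (Z j)]
    [∀ j, NormedSpace ℝ (Z j)] : Submodule ℝ (lp Z ∞) where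
  carrier := {f | Tendsto (fun j => ‖(f : ∀ j, Z j) j‖) atTop (𝓝 0)}
  add_mem' := by
    intro f g hf hg
    have h := hf.add hg
    rw [add_zero] at h
    refine squeeze_zero (fun j => norm_nonneg _) (fun j => ?_) h
    simp only [lp.coeFn_add, Pi.add_apply]
    exact norm_add_le _ _
  zero_mem' := by
    simp only [Set.mem_setOf_eq, lp.coeFn_zero, Pi.zero_apply, norm_zero]
    exact tendsto_const_nhds
  smul_mem' := by
    intro c f hf
    have h := hf.const_mul ‖c‖
    rw [mul_zero] at h
    refine squeeze_zero (fun j => norm_nonneg _) (fun j => ?_) h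
    simp only [lp.coeFn_smul, Pi.smul_apply]
    rw [norm_smul]

noncomputable def tailProj (Z : ℕ → Type*) [∀ j, NormedAddCommGroup (Z j)]
    [∀ j, NormedSpace ℝ (Z j)] (N : ℕ) : lp Z ∞ →L[ℝ] lp Z ∞ :=
  LinearMap.mkContinuous
    { toFun := fun f => ⟨fun j => if N ≤ j then (f : ∀ j, Z j) j else 0, memℓp_infty ⟨‖f‖, by
        rintro x ⟨j, rfl⟩
        dsimp only
        split
        · exact lp.norm_apply_le_norm ENNReal.top_ne_zero f j
        · simp⟩⟩
      map_add' := fun f g => by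
        ext j
        by_cases h : N ≤ j <;>
          simp [h, lp.coeFn_add, Pi.add_apply] <;> erw [Pi.add_apply] <;> simp [h]
      map_smul' := fun c f => by
        ext j
        by_cases h : N ≤ j <;>
          simp [h, lp.coeFn_smul, Pi.smul_apply] }
    1 (fun f => by
      rw [one_mul]
      refine lp.norm_le_of_forall_le (norm_nonneg f) fun j => ?_
      dsimp only [LinearMap.coe_mk, AddHom.coe_mk]
      split
      · exact lp.norm_apply_le_norm ENNReal.top_ne_zero f j
      · simp)

theorem tailProj_apply (Z : ℕ → Type*) [∀ j, NormedAddCommGroup (Z j)]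
    [∀ j, NormedSpace ℝ (Z j)] (N : ℕ) (f : lp Z ∞) (j : ℕ) :
    (tailProj Z N f : ∀ j, Z j) j = if N ≤ j then (f : ∀ j, Z j) j else 0 := rfl

theorem stmt3 {Y : Type*} [NormedAddCommGroup Y] [NormedSpace ℝ Y] [CompleteSpace Y]
    (X : Subspace ℝ Y) (hX : IsClosed (X : Set Y)) [FiniteDimensional ℝ (Y ⧸ X)]
    (Z : ℕ → Type*) [∀ j, NormedAddCommGroup (Z j)] [∀ j, NormedSpace ℝ (Z j)]
    [∀ j, CompleteSpace (Z j)]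
    (T : Y →L[ℝ] lp Z ∞) (hTX : ∀ x ∈ X, T x ∈ c0Submodule Z) :
    ∀ ε > (0 : ℝ), ∃ T' : Y →L[ℝ] ↥(c0Submodule Z),
      (∀ x ∈ X, (T' x : lp Z ∞) = T x) ∧ ‖T'‖ ≤ (2 + ε) * ‖T‖ := by
  intro ε hε
  haveI : IsClosed (X : Set Y) := hX
  rcases (norm_nonneg T).eq_or_lt with h0 | hT0
  · -- T = 0
    have hT : T = 0 := by
      rwa [eq_comm, norm_eq_zero] at h0
    refine ⟨0, fun x _ => ?_, ?_⟩
    · simp [hT]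
    · refine ContinuousLinearMap.opNorm_le_bound 0 (by positivity) (fun y => ?_)
      simp only [ContinuousLinearMap.zero_apply, norm_zero]
      positivity
  -- linear section of the quotient map
  obtain ⟨s, hs⟩ := X.mkQ.exists_rightInverse_of_surjective
    (LinearMap.range_eq_top.2 X.mkQ_surjective)
  let L : (Y ⧸ X) →L[ℝ] Y := LinearMap.toContinuousLinearMap s
  have hLsec : ∀ v, X.mkQ (L v) = v := fun v => by
    have := LinearMap.ext_iff.1 hs v
    simp at this; exact this
  -- quotient map as CLM
  let q : Y →L[ℝ] (Y ⧸ X) := LinearMap.mkContinuous X.mkQ 1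
    (fun y => by simpa using Submodule.Quotient.norm_mk_le X y)
  have hq : ∀ y, q y = X.mkQ y := fun y => rfl
  have hqnorm : ∀ y, ‖q y‖ ≤ ‖y‖ := fun y => Submodule.Quotient.norm_mk_le X y
  have hmem : ∀ y : Y, y - L (q y) ∈ X := by
    intro y
    have : X.mkQ (y - L (q y)) = 0 := by
      rw [map_sub, hLsec]; simp [hq]
    rwa [Submodule.mkQ_apply, Submodule.Quotient.mk_eq_zero] at this
  -- pointwise tail bound
  have key1 : ∀ v : Y ⧸ X, ∀ δ > (0:ℝ), ∀ᶠ j in atTop,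
      ‖(T (L v) : ∀ j, Z j) j‖ ≤ ‖T‖ * ‖v‖ + δ := by
    intro v δ hδ
    have hδ' : (0:ℝ) < δ / (2 * (‖T‖ + 1)) := by positivity
    obtain ⟨m, hm, hmlt⟩ := Submodule.Quotient.norm_mk_lt v hδ'
    have hmX : L v - m ∈ X := by
      have : X.mkQ (L v - m) = 0 := by
        rw [map_sub, hLsec, Submodule.mkQ_apply, hm, sub_self]
      rwa [Submodule.mkQ_apply, Submodule.Quotient.mk_eq_zero] at this
    have hc0 := hTX _ hmX
    have hc0' : Tendsto (fun j => ‖(T (L v - m) : ∀ j, Z j) j‖) atTop (𝓝 0) := hc0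
    have hev : ∀ᶠ j in atTop, ‖(T (L v - m) : ∀ j, Z j) j‖ < δ / 2 := by
      have := hc0'.eventually (eventually_lt_nhds (by positivity : (0:ℝ) < δ / 2))
      simpa using this
    filter_upwards [hev] with j hj
    have h1 : ‖(T m : ∀ j, Z j) j‖ ≤ ‖T‖ * ‖m‖ :=
      (lp.norm_apply_le_norm ENNReal.top_ne_zero (T m) j).trans (T.le_opNorm m)
    have h2 : (T (L v) : ∀ j, Z j) j = (T (L v - m) : ∀ j, Z j) j + (T m : ∀ j, Z j) j := by
      rw [map_sub, lp.coeFn_sub, Pi.sub_apply]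
      abel
    rw [h2]
    have h3 : ‖T‖ * ‖m‖ ≤ ‖T‖ * ‖v‖ + δ / 2 := by
      have : ‖T‖ * ‖m‖ ≤ ‖T‖ * (‖v‖ + δ / (2 * (‖T‖ + 1))) :=
        mul_le_mul_of_nonneg_left hmlt.le (norm_nonneg T)
      have h4 : ‖T‖ * (δ / (2 * (‖T‖ + 1))) ≤ δ / 2 := by
        rw [mul_div_assoc', div_le_div_iff₀ (by positivity) (by norm_num : (0:ℝ) < 2)]
        nlinarith [norm_nonneg T, hδ.le]
      nlinarith [this]
    calc ‖(T (L v - m) : ∀ j, Z j) j + (T m : ∀ j, Z j) j‖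
        ≤ ‖(T (L v - m) : ∀ j, Z j) j‖ + ‖(T m : ∀ j, Z j) j‖ := norm_add_le _ _
      _ ≤ δ / 2 + (‖T‖ * ‖v‖ + δ / 2) := add_le_add hj.le (h1.trans h3)
      _ = ‖T‖ * ‖v‖ + δ := by ring
  -- uniform bound on the unit ball
  set C : ℝ := ‖T.comp L‖ + 1 with hC
  have hCpos : (0:ℝ) < C := by positivity
  set δ₁ : ℝ := ε * ‖T‖ / 2 with hδ₁
  have hδ₁pos : (0:ℝ) < δ₁ := by positivity
  set r : ℝ := δ₁ / C with hr
  have hrpos : (0:ℝ) < r := div_pos hδ₁pos hCpos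
  have hK : IsCompact (Metric.closedBall (0 : Y ⧸ X) 1) := isCompact_closedBall _ _
  obtain ⟨t, hts, htfin, hcov⟩ := hK.elim_finite_subcover_image
    (c := fun v => Metric.ball v r)
    (fun v _ => Metric.isOpen_ball)
    (fun v hv => Set.mem_iUnion₂.2 ⟨v, hv, Metric.mem_ball_self hrpos⟩)
  have hnet : ∀ᶠ j in atTop, ∀ v ∈ t, ‖(T (L v) : ∀ j, Z j) j‖ ≤ ‖T‖ + δ₁ := by
    rw [eventually_all_finite htfin]
    intro v hv
    have hv1 : ‖v‖ ≤ 1 := by simpa using hts hv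
    filter_upwards [key1 v δ₁ hδ₁pos] with j hj
    have : ‖T‖ * ‖v‖ ≤ ‖T‖ := by nlinarith [norm_nonneg T]
    linarith
  obtain ⟨N, hN⟩ := eventually_atTop.1 hnet
  have key2 : ∀ v : Y ⧸ X, ‖v‖ ≤ 1 → ∀ j, N ≤ j → ‖(T (L v) : ∀ j, Z j) j‖ ≤ (1 + ε) * ‖T‖ := by
    intro v hv j hj
    have hvK : v ∈ Metric.closedBall (0 : Y ⧸ X) 1 := by simpa using hv
    obtain ⟨v₀, hv₀t, hvv₀⟩ := Set.mem_iUnion₂.1 (hcov hvK)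
    have hd : ‖v - v₀‖ < r := by
      rw [← dist_eq_norm]; exact Metric.mem_ball.1 hvv₀
    have h1 := hN j hj v₀ hv₀t
    have h2 : ‖(T (L (v - v₀)) : ∀ j, Z j) j‖ ≤ δ₁ := by
      have hCr : C * r = δ₁ := by rw [hr, mul_div_assoc', mul_comm, mul_div_assoc, div_self hCpos.ne', mul_one]
      calc ‖(T (L (v - v₀)) : ∀ j, Z j) j‖ ≤ ‖T (L (v - v₀))‖ :=
            lp.norm_apply_le_norm ENNReal.top_ne_zero _ j
        _ = ‖(T.comp L) (v - v₀)‖ := rfl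
        _ ≤ ‖T.comp L‖ * ‖v - v₀‖ := (T.comp L).le_opNorm _
        _ ≤ C * r := mul_le_mul (by rw [hC]; linarith) hd.le (norm_nonneg _) hCpos.le
        _ = δ₁ := hCr
    have h3 : (T (L v) : ∀ j, Z j) j
        = (T (L v₀) : ∀ j, Z j) j + (T (L (v - v₀)) : ∀ j, Z j) j := by
      rw [map_sub, map_sub, lp.coeFn_sub, Pi.sub_apply]
      abel
    rw [h3]
    calc ‖(T (L v₀) : ∀ j, Z j) j + (T (L (v - v₀)) : ∀ j, Z j) j‖
        ≤ ‖(T (L v₀) : ∀ j, Z j) j‖ + ‖(T (L (v - v₀)) : ∀ j, Z j) j‖ := norm_add_le _ _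
      _ ≤ (‖T‖ + δ₁) + δ₁ := add_le_add h1 h2
      _ = (1 + ε) * ‖T‖ := by rw [hδ₁]; ring
  have key3 : ∀ v : Y ⧸ X, ∀ j, N ≤ j → ‖(T (L v) : ∀ j, Z j) j‖ ≤ (1 + ε) * ‖T‖ * ‖v‖ := by
    intro v j hj
    rcases eq_or_ne v 0 with rfl | hv
    · simp
    · have hvn : (0:ℝ) < ‖v‖ := norm_pos_iff.2 hv
      have h1 : ‖(‖v‖⁻¹ • v)‖ ≤ 1 := by
        rw [norm_smul, norm_inv, norm_norm, inv_mul_cancel₀ hvn.ne']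
      have h2 := key2 _ h1 j hj
      rw [map_smul, map_smul, lp.coeFn_smul, Pi.smul_apply, norm_smul, norm_inv, norm_norm] at h2
      calc ‖(T (L v) : ∀ j, Z j) j‖ = ‖v‖ * (‖v‖⁻¹ * ‖(T (L v) : ∀ j, Z j) j‖) := by
            field_simp
        _ ≤ ‖v‖ * ((1 + ε) * ‖T‖) := mul_le_mul_of_nonneg_left h2 hvn.le
        _ = (1 + ε) * ‖T‖ * ‖v‖ := by ring
  -- the extension
  set S : Y →L[ℝ] lp Z ∞ := T - (tailProj Z N).comp (T.comp (L.comp q)) with hSdef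
  have hScoe : ∀ y, S y = T y - tailProj Z N (T (L (q y))) := fun y => rfl
  have hmemS : ∀ y, S y ∈ c0Submodule Z := by
    intro y
    have hx : Tendsto (fun j => ‖(T (y - L (q y)) : ∀ j, Z j) j‖) atTop (𝓝 0) :=
      hTX _ (hmem y)
    show Tendsto (fun j => ‖(S y : ∀ j, Z j) j‖) atTop (𝓝 0)
    refine hx.congr' ?_
    filter_upwards [eventually_ge_atTop N] with j hj
    have e1 : (S y : ∀ j, Z j) j
        = (T y : ∀ j, Z j) j - (T (L (q y)) : ∀ j, Z j) j := by
      rw [hScoe y, lp.coeFn_sub, Pi.sub_apply, tailProj_apply, if_pos hj]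
    have e2 : (T (y - L (q y)) : ∀ j, Z j) j
        = (T y : ∀ j, Z j) j - (T (L (q y)) : ∀ j, Z j) j := by
      rw [map_sub, lp.coeFn_sub, Pi.sub_apply]
    rw [e1, e2]
  refine ⟨S.codRestrict _ hmemS, ?_, ?_⟩
  · intro x hx
    have hqx : q x = 0 := by
      rw [hq, Submodule.mkQ_apply, Submodule.Quotient.mk_eq_zero]; exact hx
    show S x = T x
    rw [hScoe, hqx]
    simp
  · refine ContinuousLinearMap.opNorm_le_bound _ (by positivity) (fun y => ?_)
    have hrestrict : ‖S.codRestrict _ hmemS y‖ = ‖S y‖ := rfl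
    rw [hrestrict, hScoe]
    have htail : ‖tailProj Z N (T (L (q y)))‖ ≤ (1 + ε) * ‖T‖ * ‖q y‖ := by
      refine lp.norm_le_of_forall_le (by positivity) (fun j => ?_)
      rw [tailProj_apply]
      split
      · exact key3 (q y) j ‹N ≤ j›
      · simpa using (by positivity : (0:ℝ) ≤ (1 + ε) * ‖T‖ * ‖q y‖)
    calc ‖T y - tailProj Z N (T (L (q y)))‖
        ≤ ‖T y‖ + ‖tailProj Z N (T (L (q y)))‖ := norm_sub_le _ _
      _ ≤ ‖T‖ * ‖y‖ + (1 + ε) * ‖T‖ * ‖q y‖ := add_le_add (T.le_opNorm y) htail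
      _ ≤ ‖T‖ * ‖y‖ + (1 + ε) * ‖T‖ * ‖y‖ := by
          have := hqnorm y
          nlinarith [norm_nonneg T, hε.le, norm_nonneg (q y)]
      _ = (2 + ε) * ‖T‖ * ‖y‖ := by ring
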